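/- Let U = (−1,1), A > 0, τ > 0, σ ∈ ℝ, φ : ℝ → ℝ continuous, M : [0,A]² → ℝ continuous, and let μ : [−1,1] → ℝ be integrable with ∫_{−1}^{1} μ(x) dx = 1. Let ρ : [0,T]×[0,A]×[−1,1] → ℝ be continuous with continuous partial derivatives ∂_t ρ, ∂_a ρ, ∂_x ρ, ∂_{xx} ρ, satisfying pointwise ∂_t ρ + τ ∂_a ρ + ∂_x F[ρ] = 0 with flux F[ρ](t,a,x) = ρ(t,a,x) ∫_{−1}^{1} ∫_0^A M(a,b) φ(y−x)(y−x) ρ(t,b,y) db dy − (σ²/2) ∂_x ρ(t,a,x), the no-flux conditions F[ρ](t,a,±1) = 0, and the age-zero condition ρ(t,0,x) = μ(x) ∫_{−1}^{1} ρ(t,A,y) dy. Then the total mass ∫_0^A ∫_{−1}^{1} ρ(t,a,x) dx da is constant in t. -/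

import Mathlib

open MeasureTheory intervalIntegral Set Metric

private lemma fubini_aux {a b c d : ℝ} (hab : a ≤ b) (hcd : c ≤ d) (f : ℝ → ℝ → ℝ)
    (hf : Continuous fun p : ℝ × ℝ => f p.1 p.2) :
    (∫ x in a..b, ∫ y in c..d, f x y)
      = ∫ p in Set.Ioc a b ×ˢ Set.Ioc c d, f p.1 p.2 ∂(volume.prod volume) := by
  have hint : IntegrableOn (fun p : ℝ × ℝ => f p.1 p.2)
      (Set.Ioc a b ×ˢ Set.Ioc c d) (volume.prod volume) := by
    refine (hf.continuousOn.integrableOn_compact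
      ((isCompact_Icc (a := a) (b := b)).prod (isCompact_Icc (a := c) (b := d)))).mono_set ?_
    exact Set.prod_mono Set.Ioc_subset_Icc_self Set.Ioc_subset_Icc_self
  rw [MeasureTheory.setIntegral_prod _ hint, intervalIntegral.integral_of_le hab]
  refine setIntegral_congr_fun measurableSet_Ioc (fun x _ => ?_)
  rw [intervalIntegral.integral_of_le hcd]

private lemma fubini_swap {a b c d : ℝ} (hab : a ≤ b) (hcd : c ≤ d) (f : ℝ → ℝ → ℝ)
    (hf : Continuous fun p : ℝ × ℝ => f p.1 p.2) :
    (∫ x in a..b, ∫ y in c..d, f x y) = ∫ y in c..d, ∫ x in a..b, f x y := by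
  rw [fubini_aux hab hcd f hf, fubini_aux hcd hab (fun y x => f x y)
    (hf.comp (continuous_snd.prodMk continuous_fst))]
  rw [← Measure.prod_restrict, ← Measure.prod_restrict]
  exact (MeasureTheory.integral_prod_swap (fun p : ℝ × ℝ => f p.1 p.2)).symm

/-- a.e. points of `Ioc c d` (w.r.t. the restricted measure) lie in `Ioo c d`. -/
private lemma ae_Ioo_of_Ioc {c d : ℝ} :
    ∀ᵐ x ∂(volume.restrict (Set.Ioc c d)), x ∈ Set.Ioo c d := by
  have h1 : (volume.restrict (Set.Ioc c d)) {d} = 0 :=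
    le_antisymm (le_trans (Measure.restrict_le_self _) (by simp)) (by simp)
  have h2 : ∀ᵐ x ∂(volume.restrict (Set.Ioc c d)), x ≠ d := by
    refine ae_iff.2 ?_
    convert h1 using 2
    ext x; simp
  filter_upwards [ae_restrict_mem measurableSet_Ioc, h2] with x hx hxd
  exact ⟨hx.1, lt_of_le_of_ne hx.2 hxd⟩

theorem conservation_of_mass
    (T A τ σ : ℝ) (hT : 0 < T) (hA : 0 < A) (hτ : 0 < τ)
    (φ : ℝ → ℝ) (hφ : Continuous φ)
    (M : ℝ → ℝ → ℝ)
    (hM_cont : ContinuousOn (fun p : ℝ × ℝ => M p.1 p.2)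
      (Set.Icc 0 A ×ˢ Set.Icc 0 A))
    (μ : ℝ → ℝ) (hμ_int : IntegrableOn μ (Set.Icc (-1:ℝ) 1))
    (hμ_mass : ∫ x in (-1:ℝ)..1, μ x = 1)
    (ρ : ℝ → ℝ → ℝ → ℝ)
    (hρ_cont : Continuous (fun p : ℝ × ℝ × ℝ => ρ p.1 p.2.1 p.2.2))
    (hρ_t : ∀ t a x, DifferentiableAt ℝ (fun s => ρ s a x) t)
    (hρ_a : ∀ t a x, DifferentiableAt ℝ (fun b => ρ t b x) a)
    (hρ_x : ∀ t a x, DifferentiableAt ℝ (fun z => ρ t a z) x)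
    (hρ_xx : ∀ t a x, DifferentiableAt ℝ (deriv (fun z => ρ t a z)) x)
    (hρ_t_cont : Continuous (fun p : ℝ × ℝ × ℝ => deriv (fun s => ρ s p.2.1 p.2.2) p.1))
    (hρ_a_cont : Continuous (fun p : ℝ × ℝ × ℝ => deriv (fun b => ρ p.1 b p.2.2) p.2.1))
    (hρ_x_cont : Continuous (fun p : ℝ × ℝ × ℝ => deriv (fun z => ρ p.1 p.2.1 z) p.2.2))
    (hρ_xx_cont : Continuous
      (fun p : ℝ × ℝ × ℝ => deriv (deriv (fun z => ρ p.1 p.2.1 z)) p.2.2))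
    (F : ℝ → ℝ → ℝ → ℝ)
    (hF : ∀ t a x, F t a x = ρ t a x *
        (∫ y in (-1:ℝ)..1, ∫ b in (0:ℝ)..A,
          M a b * (φ (y - x) * (y - x)) * ρ t b y) -
      σ ^ 2 / 2 * deriv (fun z => ρ t a z) x)
    (hPDE : ∀ t ∈ Set.Ioo (0:ℝ) T, ∀ a ∈ Set.Ioo (0:ℝ) A, ∀ x ∈ Set.Ioo (-1:ℝ) 1,
      deriv (fun s => ρ s a x) t + τ * deriv (fun b => ρ t b x) a +
        deriv (fun z => F t a z) x = 0)
    (hNoFlux : ∀ t ∈ Set.Icc (0:ℝ) T, ∀ a ∈ Set.Icc (0:ℝ) A,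
      F t a (-1) = 0 ∧ F t a 1 = 0)
    (hAgeZero : ∀ t ∈ Set.Icc (0:ℝ) T, ∀ x ∈ Set.Icc (-1:ℝ) 1,
      ρ t 0 x = μ x * ∫ y in (-1:ℝ)..1, ρ t A y) :
    ∀ s ∈ Set.Icc (0:ℝ) T, ∀ t ∈ Set.Icc (0:ℝ) T,
      (∫ a in (0:ℝ)..A, ∫ x in (-1:ℝ)..1, ρ s a x) =
        ∫ a in (0:ℝ)..A, ∫ x in (-1:ℝ)..1, ρ t a x := by
  -- Tietze extension of M to a globally continuous function
  obtain ⟨Mc, hMc_cont, hMc_eq⟩ :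
      ∃ Mc : ℝ × ℝ → ℝ, Continuous Mc ∧
        ∀ p ∈ Set.Icc (0:ℝ) A ×ˢ Set.Icc (0:ℝ) A, Mc p = M p.1 p.2 := by
    have hs : IsClosed (Set.Icc (0:ℝ) A ×ˢ Set.Icc (0:ℝ) A) := isClosed_Icc.prod isClosed_Icc
    obtain ⟨g, hg⟩ := ContinuousMap.exists_restrict_eq (Y := ℝ) hs
      ⟨(Set.Icc (0:ℝ) A ×ˢ Set.Icc (0:ℝ) A).restrict (fun p : ℝ × ℝ => M p.1 p.2),
        hM_cont.restrict⟩
    exact ⟨g, g.continuous, fun p hp => by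
      have := congrFun (congrArg ContinuousMap.toFun hg) ⟨p, hp⟩
      exact this⟩
  set ψ : ℝ → ℝ := fun u => φ u * u with hψdef
  have hψ : Continuous ψ := hφ.mul continuous_id
  set Ψ : ℝ → ℝ := fun u => ∫ v in (0:ℝ)..u, ψ v with hΨdef
  have hΨd : ∀ u, HasDerivAt Ψ (ψ u) u := fun u => (hψ.integral_hasStrictDerivAt 0 u).hasDerivAt
  have hΨc : Continuous Ψ := by
    refine continuous_iff_continuousAt.2 fun u => ((hΨd u).differentiableAt).continuousAt
  -- the g functions
  set g : ℝ → ℝ → ℝ → ℝ := fun t a y => ∫ b in (0:ℝ)..A, Mc (a, b) * ρ t b y with hgdef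
  set g₁ : ℝ → ℝ → ℝ → ℝ :=
    fun t a y => ∫ b in (0:ℝ)..A, Mc (a, b) * deriv (fun z => ρ t b z) y with hg₁def
  -- continuity of integrands
  have hgi_cont : ∀ t a, Continuous (fun q : ℝ × ℝ => Mc (a, q.2) * ρ t q.2 q.1) := by
    intro t a
    exact (hMc_cont.comp (continuous_const.prodMk continuous_snd)).mul
      (hρ_cont.comp (continuous_const.prodMk (continuous_snd.prodMk continuous_fst)))
  have hg₁i_cont : ∀ t a,
      Continuous (fun q : ℝ × ℝ => Mc (a, q.2) * deriv (fun z => ρ t q.2 z) q.1) := by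
    intro t a
    exact (hMc_cont.comp (continuous_const.prodMk continuous_snd)).mul
      (hρ_x_cont.comp (continuous_const.prodMk (continuous_snd.prodMk continuous_fst)))
  have hg_cont : ∀ t a, Continuous (g t a) := by
    intro t a
    exact intervalIntegral.continuous_parametric_intervalIntegral_of_continuous'
      (f := fun y b => Mc (a, b) * ρ t b y) (hgi_cont t a) 0 A
  have hg₁_cont : ∀ t a, Continuous (g₁ t a) := by
    intro t a
    exact intervalIntegral.continuous_parametric_intervalIntegral_of_continuous'
      (f := fun y b => Mc (a, b) * deriv (fun z => ρ t b z) y) (hg₁i_cont t a) 0 A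
  have hbc : ∀ t a y, Continuous fun b => Mc (a, b) * ρ t b y := fun t a y =>
    (hMc_cont.comp (continuous_const.prodMk continuous_id)).mul
      (hρ_cont.comp (continuous_const.prodMk (continuous_id.prodMk continuous_const)))
  have hbc' : ∀ t a y, Continuous fun b => Mc (a, b) * deriv (fun z => ρ t b z) y := fun t a y =>
    (hMc_cont.comp (continuous_const.prodMk continuous_id)).mul
      (hρ_x_cont.comp (continuous_const.prodMk (continuous_id.prodMk continuous_const)))
  have hg_deriv : ∀ t a y₀, HasDerivAt (g t a) (g₁ t a y₀) y₀ := by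
    intro t a y₀
    obtain ⟨C, hC⟩ := ((isCompact_Icc (a := y₀ - 1) (b := y₀ + 1)).prod
      (isCompact_Icc (a := (0:ℝ)) (b := A))).exists_bound_of_continuousOn
      (hg₁i_cont t a).continuousOn
    have key := intervalIntegral.hasDerivAt_integral_of_dominated_loc_of_deriv_le
      (F := fun y b => Mc (a, b) * ρ t b y)
      (F' := fun y b => Mc (a, b) * deriv (fun z => ρ t b z) y)
      (a := 0) (b := A) (x₀ := y₀) (bound := fun _ => C) (s := ball y₀ 1) (μ := volume) (ball_mem_nhds _ one_pos)
      (Filter.Eventually.of_forall fun y => (hbc t a y).aestronglyMeasurable)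
      ((hbc t a y₀).intervalIntegrable 0 A)
      ((hbc' t a y₀).aestronglyMeasurable)
      ?_ intervalIntegrable_const
      (Filter.Eventually.of_forall fun b _ y _ =>
        ((hρ_x t b y).hasDerivAt).const_mul (Mc (a, b)))
    · exact key.2
    · refine Filter.Eventually.of_forall fun b hb y hy => ?_
      have hb' : b ∈ Set.Icc (0:ℝ) A := Set.Ioc_subset_Icc_self (Set.uIoc_of_le hA.le ▸ hb)
      have hy' : y ∈ Set.Icc (y₀ - 1) (y₀ + 1) := by
        have := abs_lt.1 (mem_ball_iff_norm.1 hy)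
        constructor <;> linarith [this.1, this.2]
      exact hC (y, b) ⟨hy', hb'⟩
  -- definition of I and J
  set I : ℝ → ℝ → ℝ → ℝ := fun t a x => ∫ y in (-1:ℝ)..1, g t a y * ψ (y - x) with hIdef
  set J : ℝ → ℝ → ℝ → ℝ := fun t a x => ∫ y in (-1:ℝ)..1, g₁ t a y * Ψ (y - x) with hJdef
  have hΨcomp : ∀ x y : ℝ, HasDerivAt (fun y' => Ψ (y' - x)) (ψ (y - x)) y := by
    intro x y
    simpa [Function.comp_def] using (hΨd (y - x)).comp y ((hasDerivAt_id y).sub_const x)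
  have hIBP : ∀ t a x, I t a x
      = g t a 1 * Ψ (1 - x) - g t a (-1) * Ψ (-1 - x) - J t a x := by
    intro t a x
    exact intervalIntegral.integral_mul_deriv_eq_deriv_mul_of_hasDerivAt
      (u := g t a) (v := fun y => Ψ (y - x)) (u' := g₁ t a) (v' := fun y => ψ (y - x))
      (hg_cont t a).continuousOn
      (hΨc.comp (continuous_id.sub continuous_const)).continuousOn
      (fun y _ => hg_deriv t a y) (fun y _ => hΨcomp x y)
      ((hg₁_cont t a).intervalIntegrable _ _)
      ((hψ.comp (continuous_id.sub continuous_const)).intervalIntegrable _ _)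
  have hJ_diff : ∀ t a x₀, DifferentiableAt ℝ (fun x => J t a x) x₀ := by
    intro t a x₀
    obtain ⟨C₁, hC₁⟩ := (isCompact_Icc (a := (-1:ℝ)) (b := 1)).exists_bound_of_continuousOn
      (hg₁_cont t a).continuousOn
    obtain ⟨C₂, hC₂⟩ := (isCompact_Icc (a := -2 - x₀) (b := 2 - x₀)).exists_bound_of_continuousOn
      hψ.continuousOn
    have hC₁0 : 0 ≤ C₁ := le_trans (norm_nonneg _) (hC₁ 0 (by norm_num))
    have key := intervalIntegral.hasDerivAt_integral_of_dominated_loc_of_deriv_le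
      (F := fun x y => g₁ t a y * Ψ (y - x))
      (F' := fun x y => g₁ t a y * -ψ (y - x))
      (a := -1) (b := 1) (x₀ := x₀) (bound := fun _ => C₁ * (C₂ + 1)) (s := ball x₀ 1) (μ := volume)
      (ball_mem_nhds _ one_pos)
      (Filter.Eventually.of_forall fun x =>
        ((hg₁_cont t a).mul (hΨc.comp (continuous_id.sub continuous_const))).aestronglyMeasurable)
      (((hg₁_cont t a).mul (hΨc.comp (continuous_id.sub continuous_const))).intervalIntegrable _ _)
      (((hg₁_cont t a).mul ((hψ.comp (continuous_id.sub continuous_const)).neg)).aestronglyMeasurable)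
      ?_ intervalIntegrable_const ?_
    · exact key.2.differentiableAt
    · refine Filter.Eventually.of_forall fun y hy x hx => ?_
      have hy' : y ∈ Set.Icc (-1:ℝ) 1 :=
        Set.Ioc_subset_Icc_self (Set.uIoc_of_le (by norm_num : (-1:ℝ) ≤ 1) ▸ hy)
      have hx' := abs_lt.1 (mem_ball_iff_norm.1 hx)
      have hyx : y - x ∈ Set.Icc (-2 - x₀) (2 - x₀) := by
        constructor <;> [linarith [hy'.1, hx'.2]; linarith [hy'.2, hx'.1]]
      have h1 : ‖g₁ t a y‖ ≤ C₁ := hC₁ y hy'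
      have h2 : ‖ψ (y - x)‖ ≤ C₂ := hC₂ _ hyx
      calc ‖g₁ t a y * -ψ (y - x)‖ = ‖g₁ t a y‖ * ‖ψ (y - x)‖ := by
            rw [norm_mul, norm_neg]
        _ ≤ C₁ * (C₂ + 1) := by
            apply mul_le_mul h1 (h2.trans (le_add_of_nonneg_right zero_le_one)) (norm_nonneg _) hC₁0
    · refine Filter.Eventually.of_forall fun y _ x _ => ?_
      have : HasDerivAt (fun x' => Ψ (y - x')) (-ψ (y - x)) x := by
        simpa [Function.comp_def] using (hΨd (y - x)).comp x ((hasDerivAt_id x).const_sub y)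
      exact this.const_mul (g₁ t a y)
  have hI_diff : ∀ t a x, DifferentiableAt ℝ (fun x' => I t a x') x := by
    intro t a x
    have : (fun x' => I t a x') = fun x' =>
        g t a 1 * Ψ (1 - x') - g t a (-1) * Ψ (-1 - x') - J t a x' := funext (hIBP t a)
    rw [this]
    have hd1 : ∀ c : ℝ, DifferentiableAt ℝ (fun x' : ℝ => Ψ (c - x')) x := by
      intro c
      exact (((hΨd (c - x)).comp x ((hasDerivAt_id x).const_sub c))).differentiableAt
    exact (((hd1 1).const_mul _).sub ((hd1 (-1)).const_mul _)).sub (hJ_diff t a x)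
  -- identification of the interaction term with I
  have hKI : ∀ t x : ℝ, ∀ a ∈ Set.Icc (0:ℝ) A,
      (∫ y in (-1:ℝ)..1, ∫ b in (0:ℝ)..A, M a b * (φ (y - x) * (y - x)) * ρ t b y)
        = I t a x := by
    intro t x a ha
    refine intervalIntegral.integral_congr fun y _ => ?_
    have h1 : (∫ b in (0:ℝ)..A, M a b * (φ (y - x) * (y - x)) * ρ t b y)
        = ∫ b in (0:ℝ)..A, (Mc (a, b) * ρ t b y) * ψ (y - x) := by
      refine intervalIntegral.integral_congr fun b hb => ?_
      have hb' : b ∈ Set.Icc (0:ℝ) A := Set.uIcc_of_le hA.le ▸ hb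
      rw [← hMc_eq (a, b) ⟨ha, hb'⟩]
      simp only [hψdef]; ring
    rw [h1, intervalIntegral.integral_mul_const]
  have hF_eq : ∀ t x : ℝ, ∀ a ∈ Set.Icc (0:ℝ) A,
      F t a x = ρ t a x * I t a x - σ ^ 2 / 2 * deriv (fun z => ρ t a z) x := by
    intro t x a ha
    rw [hF, hKI t x a ha]
  have hF_diff : ∀ t x : ℝ, ∀ a ∈ Set.Icc (0:ℝ) A,
      DifferentiableAt ℝ (fun z => F t a z) x := by
    intro t x a ha
    have : (fun z => F t a z) = fun z =>
        ρ t a z * I t a z - σ ^ 2 / 2 * deriv (fun z' => ρ t a z') z :=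
      funext fun z => hF_eq t z a ha
    rw [this]
    exact ((hρ_x t a x).mul (hI_diff t a x)).sub ((hρ_xx t a x).const_mul _)
  -- integrability of deriv F and FTC
  have hPDEcont : ∀ t a : ℝ, Continuous (fun x =>
      -deriv (fun s => ρ s a x) t - τ * deriv (fun b => ρ t b x) a) := by
    intro t a
    exact ((hρ_t_cont.comp (continuous_const.prodMk
      (continuous_const.prodMk continuous_id))).neg).sub
      (continuous_const.mul (hρ_a_cont.comp (continuous_const.prodMk
        (continuous_const.prodMk continuous_id))))
  have hderivF_ae : ∀ t ∈ Set.Ioo (0:ℝ) T, ∀ a ∈ Set.Ioo (0:ℝ) A,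
      (fun x => -deriv (fun s => ρ s a x) t - τ * deriv (fun b => ρ t b x) a)
        =ᵐ[volume.restrict (Set.Ioc (-1:ℝ) 1)] (deriv (fun z => F t a z)) := by
    intro t ht a ha
    filter_upwards [ae_Ioo_of_Ioc] with x hx
    have := hPDE t ht a ha x hx
    linarith
  have hderivF_int : ∀ t ∈ Set.Ioo (0:ℝ) T, ∀ a ∈ Set.Ioo (0:ℝ) A,
      IntervalIntegrable (deriv (fun z => F t a z)) volume (-1) 1 := by
    intro t ht a ha
    rw [intervalIntegrable_iff_integrableOn_Ioc_of_le (by norm_num : (-1:ℝ) ≤ 1)]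
    exact (((hPDEcont t a).intervalIntegrable (-1) 1).1.congr (hderivF_ae t ht a ha))
  have hFTC : ∀ t ∈ Set.Ioo (0:ℝ) T, ∀ a ∈ Set.Ioo (0:ℝ) A,
      (∫ x in (-1:ℝ)..1, deriv (fun z => F t a z) x) = 0 := by
    intro t ht a ha
    have ha' : a ∈ Set.Icc (0:ℝ) A := Set.Ioo_subset_Icc_self ha
    rw [intervalIntegral.integral_eq_sub_of_hasDeriv_right_of_le (by norm_num : (-1:ℝ) ≤ 1)
      (fun x _ => ((hF_diff t x a ha').continuousAt).continuousWithinAt)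
      (fun x _ => ((hF_diff t x a ha').hasDerivAt).hasDerivWithinAt)
      (hderivF_int t ht a ha)]
    rw [(hNoFlux t (Set.Ioo_subset_Icc_self ht) a ha').1,
      (hNoFlux t (Set.Ioo_subset_Icc_self ht) a ha').2]
    ring
  -- the total mass function and its derivative
  set SP : Set (ℝ × ℝ) := Set.Ioc (0:ℝ) A ×ˢ Set.Ioc (-1:ℝ) 1 with hSPdef
  have hSPmeas : MeasurableSet SP := measurableSet_Ioc.prod measurableSet_Ioc
  have hSPfin : (volume.prod volume) SP < ⊤ := by
    rw [hSPdef, Measure.prod_prod, Real.volume_Ioc, Real.volume_Ioc]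
    exact ENNReal.mul_lt_top ENNReal.ofReal_lt_top ENNReal.ofReal_lt_top
  set m : ℝ → ℝ := fun t => ∫ a in (0:ℝ)..A, ∫ x in (-1:ℝ)..1, ρ t a x with hmdef
  set D : ℝ → ℝ :=
    fun t => ∫ p in SP, deriv (fun s => ρ s p.1 p.2) t ∂(volume.prod volume) with hDdef
  have hρt_c : ∀ t, Continuous fun p : ℝ × ℝ => ρ t p.1 p.2 := fun t =>
    hρ_cont.comp (continuous_const.prodMk (continuous_fst.prodMk continuous_snd))
  have hm_eq : m = fun t => ∫ p in SP, ρ t p.1 p.2 ∂(volume.prod volume) :=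
    funext fun t => fubini_aux hA.le (by norm_num : (-1:ℝ) ≤ 1) (fun a x => ρ t a x) (hρt_c t)
  have hm_deriv : ∀ t₀ : ℝ, HasDerivAt m (D t₀) t₀ := by
    intro t₀
    rw [hm_eq]
    obtain ⟨C, hC⟩ := ((isCompact_Icc (a := t₀ - 1) (b := t₀ + 1)).prod
      ((isCompact_Icc (a := (0:ℝ)) (b := A)).prod
        (isCompact_Icc (a := (-1:ℝ)) (b := 1)))).exists_bound_of_continuousOn
      hρ_t_cont.continuousOn
    have key := _root_.hasDerivAt_integral_of_dominated_loc_of_deriv_le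
      (μ := (volume.prod volume).restrict SP)
      (F := fun s (p : ℝ × ℝ) => ρ s p.1 p.2)
      (F' := fun s (p : ℝ × ℝ) => deriv (fun s' => ρ s' p.1 p.2) s)
      (x₀ := t₀) (bound := fun _ => C) (s := ball t₀ 1) (ball_mem_nhds _ one_pos)
      (Filter.Eventually.of_forall fun s => (hρt_c s).aestronglyMeasurable)
      ?_ ?_ ?_ ?_ ?_
    · exact key.2
    · -- integrability of ρ t₀ on SP
      refine ((hρt_c t₀).continuousOn.integrableOn_compact
        ((isCompact_Icc (a := (0:ℝ)) (b := A)).prod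
          (isCompact_Icc (a := (-1:ℝ)) (b := 1)))).mono_set ?_
      exact Set.prod_mono Set.Ioc_subset_Icc_self Set.Ioc_subset_Icc_self
    · exact (hρ_t_cont.comp
        (continuous_const.prodMk (continuous_fst.prodMk continuous_snd))).aestronglyMeasurable
    · refine (ae_restrict_iff' hSPmeas).2 (Filter.Eventually.of_forall fun p hp s hs => ?_)
      have hs' : s ∈ Set.Icc (t₀ - 1) (t₀ + 1) := by
        have := abs_lt.1 (mem_ball_iff_norm.1 hs)
        constructor <;> linarith [this.1, this.2]
      exact hC (s, p) ⟨hs', ⟨Set.Ioc_subset_Icc_self hp.1, Set.Ioc_subset_Icc_self hp.2⟩⟩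
    · exact (integrableOn_const hSPfin.ne)
    · exact Filter.Eventually.of_forall fun p s _ => (hρ_t s p.1 p.2).hasDerivAt
  -- the derivative vanishes on (0, T)
  have hD0 : ∀ t ∈ Set.Ioo (0:ℝ) T, D t = 0 := by
    intro t ht
    have hρtc : Continuous fun p : ℝ × ℝ => deriv (fun s => ρ s p.1 p.2) t :=
      hρ_t_cont.comp (continuous_const.prodMk (continuous_fst.prodMk continuous_snd))
    have hρac : Continuous fun p : ℝ × ℝ => deriv (fun b => ρ t b p.2) p.1 :=
      hρ_a_cont.comp (continuous_const.prodMk (continuous_fst.prodMk continuous_snd))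
    have h1 : D t = ∫ a in (0:ℝ)..A, ∫ x in (-1:ℝ)..1, deriv (fun s => ρ s a x) t := by
      rw [hDdef]
      exact (fubini_aux hA.le (by norm_num : (-1:ℝ) ≤ 1)
        (fun a x => deriv (fun s => ρ s a x) t) hρtc).symm
    have h2 : (∫ a in (0:ℝ)..A, ∫ x in (-1:ℝ)..1, deriv (fun s => ρ s a x) t)
        = ∫ a in (0:ℝ)..A, -(τ * ∫ x in (-1:ℝ)..1, deriv (fun b => ρ t b x) a) := by
      apply intervalIntegral.integral_congr_ae
      have hne : ∀ᵐ a : ℝ ∂volume, a ≠ A := by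
        refine ae_iff.2 ?_
        have : {a : ℝ | ¬a ≠ A} = {A} := by ext a; simp
        rw [this]
        exact measure_singleton A
      filter_upwards [hne] with a haA hmem
      have ha : a ∈ Set.Ioo (0:ℝ) A := by
        rw [Set.uIoc_of_le hA.le] at hmem
        exact ⟨hmem.1, lt_of_le_of_ne hmem.2 haA⟩
      -- inner computation for fixed a ∈ Ioo 0 A
      have hin : (∫ x in (-1:ℝ)..1, deriv (fun s => ρ s a x) t)
          = ∫ x in (-1:ℝ)..1,
            ((-τ) * deriv (fun b => ρ t b x) a - deriv (fun z => F t a z) x) := by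
        apply intervalIntegral.integral_congr_ae
        have hne1 : ∀ᵐ x : ℝ ∂volume, x ≠ 1 := by
          refine ae_iff.2 ?_
          have : {x : ℝ | ¬x ≠ 1} = {1} := by ext x; simp
          rw [this]
          exact measure_singleton 1
        filter_upwards [hne1] with x hx1 hxmem
        have hx : x ∈ Set.Ioo (-1:ℝ) 1 := by
          rw [Set.uIoc_of_le (by norm_num : (-1:ℝ) ≤ 1)] at hxmem
          exact ⟨hxmem.1, lt_of_le_of_ne hxmem.2 hx1⟩
        have := hPDE t ht a ha x hx
        linarith
      have hc1 : IntervalIntegrable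
          (fun x => (-τ) * deriv (fun b => ρ t b x) a) volume (-1) 1 :=
        (continuous_const.mul (hρ_a_cont.comp (continuous_const.prodMk
          (continuous_const.prodMk continuous_id)))).intervalIntegrable _ _
      rw [hin, intervalIntegral.integral_sub hc1 (hderivF_int t ht a ha),
        hFTC t ht a ha, intervalIntegral.integral_const_mul]
      ring
    have h3 : (∫ a in (0:ℝ)..A, -(τ * ∫ x in (-1:ℝ)..1, deriv (fun b => ρ t b x) a))
        = -(τ * ∫ a in (0:ℝ)..A, ∫ x in (-1:ℝ)..1, deriv (fun b => ρ t b x) a) := by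
      rw [intervalIntegral.integral_neg, intervalIntegral.integral_const_mul]
    have h4 : (∫ a in (0:ℝ)..A, ∫ x in (-1:ℝ)..1, deriv (fun b => ρ t b x) a)
        = ∫ x in (-1:ℝ)..1, ∫ a in (0:ℝ)..A, deriv (fun b => ρ t b x) a :=
      fubini_swap hA.le (by norm_num : (-1:ℝ) ≤ 1) _ hρac
    have h5 : (∫ x in (-1:ℝ)..1, ∫ a in (0:ℝ)..A, deriv (fun b => ρ t b x) a)
        = ∫ x in (-1:ℝ)..1, (ρ t A x - ρ t 0 x) := by
      refine intervalIntegral.integral_congr fun x _ => ?_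
      exact intervalIntegral.integral_deriv_eq_sub (fun a _ => hρ_a t a x)
        ((hρ_a_cont.comp (continuous_const.prodMk
          (continuous_id.prodMk continuous_const))).intervalIntegrable 0 A)
    have hρAc : Continuous fun x => ρ t A x :=
      hρ_cont.comp (continuous_const.prodMk (continuous_const.prodMk continuous_id))
    have hρ0c : Continuous fun x => ρ t 0 x :=
      hρ_cont.comp (continuous_const.prodMk (continuous_const.prodMk continuous_id))
    have h6 : (∫ x in (-1:ℝ)..1, (ρ t A x - ρ t 0 x))
        = (∫ x in (-1:ℝ)..1, ρ t A x) - ∫ x in (-1:ℝ)..1, ρ t 0 x :=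
      intervalIntegral.integral_sub (hρAc.intervalIntegrable _ _)
        (hρ0c.intervalIntegrable _ _)
    have h7 : (∫ x in (-1:ℝ)..1, ρ t 0 x) = ∫ x in (-1:ℝ)..1, ρ t A x := by
      have : (∫ x in (-1:ℝ)..1, ρ t 0 x)
          = ∫ x in (-1:ℝ)..1, μ x * ∫ y in (-1:ℝ)..1, ρ t A y := by
        refine intervalIntegral.integral_congr fun x hx => ?_
        exact hAgeZero t (Set.Ioo_subset_Icc_self ht) x
          (Set.uIcc_of_le (by norm_num : (-1:ℝ) ≤ 1) ▸ hx)
      rw [this]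
      rw [show (fun x => μ x * ∫ y in (-1:ℝ)..1, ρ t A y)
          = fun x => μ x * ∫ y in (-1:ℝ)..1, ρ t A y from rfl]
      rw [intervalIntegral.integral_mul_const, hμ_mass, one_mul]
    rw [h1, h2, h3, h4, h5, h6, h7]
    ring
  -- conclusion via the mean value theorem
  have key : ∀ u v : ℝ, u ∈ Set.Icc (0:ℝ) T → v ∈ Set.Icc (0:ℝ) T → u < v → m u = m v := by
    intro u v hu hv huv
    obtain ⟨c, hc, hceq⟩ := exists_hasDerivAt_eq_slope m D huv
      (fun x _ => (hm_deriv x).continuousAt.continuousWithinAt)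
      (fun x _ => hm_deriv x)
    have hc' : c ∈ Set.Ioo (0:ℝ) T := ⟨lt_of_le_of_lt hu.1 hc.1, lt_of_lt_of_le hc.2 hv.2⟩
    rw [hD0 c hc'] at hceq
    have := (div_eq_zero_iff.1 hceq.symm).resolve_right (sub_ne_zero.2 (ne_of_gt huv))
    linarith [sub_eq_zero.1 this]
  intro s hs t ht
  rcases lt_trichotomy s t with h | h | h
  · exact key s t hs ht h
  · rw [h]
  · exact (key t s ht hs h).symm
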